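/- Let n ≥ 2 and 1 ≤ m ≤ n−1, and let R, L ≥ 0. For any centers c, c' ∈ ℂ, orientations θ, θ' ∈ ℝ, and points M, M' ∈ ℂ with |M − c| = L and |M' − c'| = R, one has ∑_{k=0}^{n−1} |M − (c + R·exp(I·(2πk/n + θ)))|^{2m} = ∑_{k=0}^{n−1} |M' − (c' + L·exp(I·(2πk/n + θ')))|^{2m}; that is, the power sums of the squared distances up to exponent n−1 are unchanged when the circumradius R and the point-to-center distance L are interchanged. -/

import Mathlib

open Complex Real Finset

noncomputable def pzeta (n : ℕ) : ℂ := Complex.exp (2 * (Real.pi : ℂ) * Complex.I / n)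

lemma pzeta_ne_zero (n : ℕ) : pzeta n ≠ 0 := Complex.exp_ne_zero _

lemma pzeta_pow (n : ℕ) (hn : n ≠ 0) : pzeta n ^ n = 1 := by
  rw [pzeta, ← Complex.exp_nat_mul]
  have h : (n : ℂ) * (2 * (Real.pi : ℂ) * Complex.I / n) = 2 * (Real.pi : ℂ) * Complex.I := by
    have : (n : ℂ) ≠ 0 := Nat.cast_ne_zero.mpr hn
    field_simp
  rw [h, Complex.exp_two_pi_mul_I]

lemma sum_pzeta (n : ℕ) (hn : n ≠ 0) (d : ℤ) :
    ∑ k ∈ Finset.range n, pzeta n ^ ((k : ℤ) * d) = if (n : ℤ) ∣ d then (n : ℂ) else 0 := by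
  have hprim : IsPrimitiveRoot (pzeta n) n := Complex.isPrimitiveRoot_exp n hn
  have h1 : ∀ k : ℕ, pzeta n ^ ((k : ℤ) * d) = (pzeta n ^ d) ^ k := by
    intro k; rw [mul_comm, zpow_mul, zpow_natCast]
  simp_rw [h1]
  by_cases h : (n : ℤ) ∣ d
  · have hz : pzeta n ^ d = 1 := (hprim.zpow_eq_one_iff_dvd d).mpr h
    simp [hz, h]
  · have hne : pzeta n ^ d ≠ 1 := fun hh => h ((hprim.zpow_eq_one_iff_dvd d).mp hh)
    rw [geom_sum_eq hne]
    have hone : (pzeta n ^ d) ^ n = 1 := by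
      rw [← zpow_natCast (pzeta n ^ d) n, ← zpow_mul, mul_comm, zpow_mul, zpow_natCast,
        pzeta_pow n hn, one_zpow]
    rw [hone, if_neg h, sub_self, zero_div]

lemma key_lemma (n m : ℕ) (hn : 2 ≤ n) (hm : m ≤ n - 1) (x u v u' v' : ℂ)
    (huv : u * v = u' * v') :
    ∑ k ∈ Finset.range n, (x + u * pzeta n ^ k + v * (pzeta n ^ k)⁻¹) ^ m
      = ∑ k ∈ Finset.range n, (x + u' * pzeta n ^ k + v' * (pzeta n ^ k)⁻¹) ^ m := by
  have hn0 : n ≠ 0 := by omega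
  have hζ : pzeta n ≠ 0 := pzeta_ne_zero n
  have hz : ∀ (k p q : ℕ), (pzeta n ^ k) ^ p * ((pzeta n ^ k)⁻¹) ^ q
      = pzeta n ^ ((k : ℤ) * ((p : ℤ) - (q : ℤ))) := by
    intro k p q
    rw [inv_pow, ← pow_mul, ← pow_mul, ← zpow_natCast (pzeta n) (k * p),
      ← zpow_natCast (pzeta n) (k * q), ← zpow_neg, ← zpow_add₀ hζ]
    congr 1
    push_cast
    ring
  have expand : ∀ w z : ℂ, ∑ k ∈ Finset.range n, (x + w * pzeta n ^ k + z * (pzeta n ^ k)⁻¹) ^ m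
      = ∑ j ∈ Finset.range (m + 1), ∑ i ∈ Finset.range (m - j + 1),
          x ^ j * (w ^ i * z ^ (m - j - i) * ((m - j).choose i : ℂ)) * (m.choose j : ℂ) *
            (if (n : ℤ) ∣ ((i : ℤ) - ((m - j - i : ℕ) : ℤ)) then (n : ℂ) else 0) := by
    intro w z
    have step1 : ∀ k : ℕ, (x + w * pzeta n ^ k + z * (pzeta n ^ k)⁻¹) ^ m
        = ∑ j ∈ Finset.range (m + 1), ∑ i ∈ Finset.range (m - j + 1),
            x ^ j * (w ^ i * z ^ (m - j - i) * ((m - j).choose i : ℂ)) * (m.choose j : ℂ) *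
              pzeta n ^ ((k : ℤ) * ((i : ℤ) - ((m - j - i : ℕ) : ℤ))) := by
      intro k
      rw [add_assoc, add_pow]
      refine Finset.sum_congr rfl fun j _ => ?_
      rw [add_pow, Finset.mul_sum, Finset.sum_mul]
      refine Finset.sum_congr rfl fun i _ => ?_
      rw [mul_pow, mul_pow]
      rw [show w ^ i * (pzeta n ^ k) ^ i * (z ^ (m - j - i) * ((pzeta n ^ k)⁻¹) ^ (m - j - i))
          = w ^ i * z ^ (m - j - i) * ((pzeta n ^ k) ^ i * ((pzeta n ^ k)⁻¹) ^ (m - j - i)) by ring]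
      rw [hz k i (m - j - i)]
      ring
    rw [Finset.sum_congr rfl fun k _ => step1 k]
    rw [Finset.sum_comm]
    refine Finset.sum_congr rfl fun j _ => ?_
    rw [Finset.sum_comm]
    refine Finset.sum_congr rfl fun i _ => ?_
    rw [← Finset.mul_sum, sum_pzeta n hn0]
  rw [expand u v, expand u' v']
  refine Finset.sum_congr rfl fun j hj => Finset.sum_congr rfl fun i hi => ?_
  by_cases h : (n : ℤ) ∣ ((i : ℤ) - ((m - j - i : ℕ) : ℤ))
  · have hi' : i ≤ m - j := Finset.mem_range_succ_iff.mp hi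
    have hj' : j ≤ m := Finset.mem_range_succ_iff.mp hj
    have hd0 : (i : ℤ) - ((m - j - i : ℕ) : ℤ) = 0 := by
      refine Int.eq_zero_of_dvd_of_natAbs_lt_natAbs h ?_
      have : ((i : ℤ) - ((m - j - i : ℕ) : ℤ)).natAbs < n := by omega
      simpa using this
    have hpi : m - j - i = i := by omega
    rw [hpi]
    rw [show u ^ i * v ^ i = (u * v) ^ i by rw [mul_pow],
      show u' ^ i * v' ^ i = (u' * v') ^ i by rw [mul_pow], huv]
  · rw [if_neg h, mul_zero, mul_zero]

lemma term_expand (n : ℕ) (hn : n ≠ 0) (k : ℕ) (ρ : ℝ) (a : ℂ) (θ : ℝ) :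
    (a - (ρ : ℂ) * Complex.exp (Complex.I * ((2 * π * k / n + θ : ℝ) : ℂ))) *
      (starRingEnd ℂ) (a - (ρ : ℂ) * Complex.exp (Complex.I * ((2 * π * k / n + θ : ℝ) : ℂ)))
    = (a * (starRingEnd ℂ) a + (ρ : ℂ) ^ 2)
        + (-(ρ : ℂ) * (starRingEnd ℂ) a * Complex.exp (Complex.I * θ)) * pzeta n ^ k
        + (-(ρ : ℂ) * a * (Complex.exp (Complex.I * θ))⁻¹) * (pzeta n ^ k)⁻¹ := by
  set t : ℝ := 2 * π * k / n + θ with ht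
  have hE : Complex.exp (Complex.I * (t : ℂ)) = Complex.exp (Complex.I * θ) * pzeta n ^ k := by
    rw [pzeta, ← Complex.exp_nat_mul, ← Complex.exp_add]
    congr 1
    have hn' : (n : ℂ) ≠ 0 := Nat.cast_ne_zero.mpr hn
    rw [ht]
    push_cast
    field_simp
    ring
  have hconj : (starRingEnd ℂ) (Complex.exp (Complex.I * (t : ℂ)))
      = (Complex.exp (Complex.I * (t : ℂ)))⁻¹ := by
    rw [← Complex.exp_conj, ← Complex.exp_neg]
    congr 1
    simp [Complex.conj_ofReal]
  rw [map_sub, map_mul, Complex.conj_ofReal, hconj, hE, mul_inv]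
  have h1 : pzeta n ^ k ≠ 0 := pow_ne_zero _ (pzeta_ne_zero n)
  have h2 : Complex.exp (Complex.I * θ) ≠ 0 := Complex.exp_ne_zero _
  field_simp
  ring

theorem power_sums_symmetric_in_R_L (n m : ℕ) (hn : 2 ≤ n) (hm1 : 1 ≤ m) (hm2 : m ≤ n - 1)
    (R L : ℝ) (hR : 0 ≤ R) (hL : 0 ≤ L)
    (c c' M M' : ℂ) (θ θ' : ℝ)
    (hMc : ‖M - c‖ = L) (hM'c' : ‖M' - c'‖ = R) :
    ∑ k ∈ Finset.range n,
        (‖M - (c + R * Complex.exp (Complex.I * ((2 * π * k / n + θ : ℝ) : ℂ)))‖) ^ (2 * m)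
      = ∑ k ∈ Finset.range n,
          (‖M' - (c' + L * Complex.exp (Complex.I * ((2 * π * k / n + θ' : ℝ) : ℂ)))‖) ^ (2 * m) := by
  have hn0 : n ≠ 0 := by omega
  apply Complex.ofReal_injective
  rw [Complex.ofReal_sum, Complex.ofReal_sum]
  have habs : ∀ z : ℂ, ((‖z‖ : ℝ) : ℂ) ^ (2 * m) = (z * (starRingEnd ℂ) z) ^ m := by
    intro z
    rw [pow_mul, ← Complex.ofReal_pow, Complex.sq_norm, Complex.mul_conj]
  simp_rw [Complex.ofReal_pow, habs, sub_add_eq_sub_sub, term_expand n hn0]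
  have hL2 : (M - c) * (starRingEnd ℂ) (M - c) = ((L : ℂ)) ^ 2 := by
    rw [Complex.mul_conj, Complex.normSq_eq_norm_sq, hMc]
    push_cast
    ring
  have hR2 : (M' - c') * (starRingEnd ℂ) (M' - c') = ((R : ℂ)) ^ 2 := by
    rw [Complex.mul_conj, Complex.normSq_eq_norm_sq, hM'c']
    push_cast
    ring
  rw [hL2, hR2]
  rw [show ((R : ℂ) ^ 2 + (L : ℂ) ^ 2) = ((L : ℂ) ^ 2 + (R : ℂ) ^ 2) from add_comm _ _]
  refine key_lemma n m hn hm2 _ _ _ _ _ ?_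
  have e1 : Complex.exp (Complex.I * (θ : ℂ)) * (Complex.exp (Complex.I * (θ : ℂ)))⁻¹ = 1 :=
    mul_inv_cancel₀ (Complex.exp_ne_zero _)
  have e2 : Complex.exp (Complex.I * (θ' : ℂ)) * (Complex.exp (Complex.I * (θ' : ℂ)))⁻¹ = 1 :=
    mul_inv_cancel₀ (Complex.exp_ne_zero _)
  linear_combination (R : ℂ) ^ 2 * (Complex.exp (Complex.I * (θ : ℂ)) * (Complex.exp (Complex.I * (θ : ℂ)))⁻¹) * hL2
    + (R : ℂ) ^ 2 * (L : ℂ) ^ 2 * e1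
    - (L : ℂ) ^ 2 * (Complex.exp (Complex.I * (θ' : ℂ)) * (Complex.exp (Complex.I * (θ' : ℂ)))⁻¹) * hR2
    - (L : ℂ) ^ 2 * (R : ℂ) ^ 2 * e2
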